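/- $\sum_{k=1}^{\infty} \frac{h_k^{(2)}}{(2k-1)^2} = \frac{75}{64}\zeta(4)$. -/

import Mathlib

open Real

noncomputable def H (n k : ℕ) : ℝ := ∑ i ∈ Finset.Icc 1 k, 1 / (i : ℝ) ^ n

noncomputable def h (n k : ℕ) : ℝ := ∑ i ∈ Finset.Icc 1 k, 1 / (2 * (i : ℝ) - 1) ^ n

noncomputable def zeta (s : ℕ) : ℝ := ∑' n : ℕ, 1 / ((n : ℝ) + 1) ^ s

namespace Stmt9Aux

noncomputable def a (k : ℕ) : ℝ := 1 / (2 * (k : ℝ) + 1) ^ 2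
noncomputable def b (k : ℕ) : ℝ := 1 / (2 * (k : ℝ) + 1) ^ 4

lemma odd_hasSum {c e : ℝ} (f : ℕ → ℝ) (hf : HasSum f c)
    (he : HasSum (fun k => f (2 * k)) e) :
    HasSum (fun k => f (2 * k + 1)) (c - e) := by
  have hs : Summable (fun k => f (2 * k + 1)) :=
    hf.summable.comp_injective (fun m n hmn => by omega)
  have := HasSum.even_add_odd he hs.hasSum
  have hc : e + ∑' k, f (2 * k + 1) = c := this.unique hf
  have h3 : (∑' k, f (2 * k + 1)) = c - e := by linarith
  exact h3 ▸ hs.hasSum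

lemma ha : HasSum a (π ^ 2 / 8) := by
  have h2 := hasSum_zeta_two
  have he : HasSum (fun k : ℕ => (1:ℝ) / ((2 * k : ℕ) : ℝ) ^ 2) (π ^ 2 / 24) := by
    have hm := h2.mul_left (1/4)
    have hf : (fun k : ℕ => (1:ℝ)/((2*k:ℕ):ℝ)^2) = fun k : ℕ => 1/4 * (1/(k:ℝ)^2) := by
      funext k; push_cast
      rcases eq_or_ne (k:ℝ) 0 with h0|h0
      · simp [h0]
      · field_simp; ring
    rw [hf, show π ^ 2 / 24 = 1 / 4 * (π ^ 2 / 6) by ring]; exact hm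
  have ho := odd_hasSum _ h2 he
  have : (fun k : ℕ => (1:ℝ) / ((2 * k + 1 : ℕ) : ℝ) ^ 2) = a := by
    funext k; unfold a; push_cast; ring_nf
  rw [this] at ho
  convert ho using 1; ring

lemma hb : HasSum b (π ^ 4 / 96) := by
  have h4 := hasSum_zeta_four
  have he : HasSum (fun k : ℕ => (1:ℝ) / ((2 * k : ℕ) : ℝ) ^ 4) (π ^ 4 / (16 * 90)) := by
    have hm := h4.mul_left (1/16)
    have hf : (fun k : ℕ => (1:ℝ)/((2*k:ℕ):ℝ)^4) = fun k : ℕ => 1/16 * (1/(k:ℝ)^4) := by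
      funext k; push_cast
      rcases eq_or_ne (k:ℝ) 0 with h0|h0
      · simp [h0]
      · field_simp; ring
    rw [hf, show π ^ 4 / (16 * 90) = 1 / 16 * (π ^ 4 / 90) by ring]; exact hm
  have ho := odd_hasSum _ h4 he
  have : (fun k : ℕ => (1:ℝ) / ((2 * k + 1 : ℕ) : ℝ) ^ 4) = b := by
    funext k; unfold b; push_cast; ring_nf
  rw [this] at ho
  convert ho using 1; ring

lemma a_nonneg (k : ℕ) : 0 ≤ a k := by
  unfold a; positivity

lemma a_sq (k : ℕ) : a k ^ 2 = b k := by
  unfold a b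
  have : (2 * (k : ℝ) + 1) ≠ 0 := by positivity
  field_simp

noncomputable def P (N : ℕ) : ℝ := ∑ i ∈ Finset.range N, a i

lemma telescope (N : ℕ) :
    ∑ k ∈ Finset.range N, (2 * (a k * P (k + 1)) - a k ^ 2) = (P N) ^ 2 := by
  induction N with
  | zero => simp [P]
  | succ n ih =>
      rw [Finset.sum_range_succ, ih]
      have : P (n + 1) = P n + a n := by rw [P, Finset.sum_range_succ]; rfl
      rw [this]; ring

lemma P_le (N : ℕ) : P N ≤ π ^ 2 / 8 := by
  exact sum_le_hasSum _ (fun i _ => a_nonneg i) ha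

lemma key : HasSum (fun k => a k * P (k + 1)) (((π ^ 2 / 8) ^ 2 + π ^ 4 / 96) / 2) := by
  have hsum : Summable (fun k => a k * P (k + 1)) := by
    apply Summable.of_nonneg_of_le (fun k => ?_) (fun k => ?_)
      (ha.summable.mul_left (π ^ 2 / 8))
    · have h1 := a_nonneg k
      have h2 : 0 ≤ P (k + 1) := Finset.sum_nonneg fun i _ => a_nonneg i
      positivity
    · calc a k * P (k + 1) ≤ a k * (π ^ 2 / 8) :=
            mul_le_mul_of_nonneg_left (P_le _) (a_nonneg k)
        _ = π ^ 2 / 8 * a k := by ring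
  set X := ∑' k, a k * P (k + 1) with hX
  have hx : HasSum (fun k => a k * P (k + 1)) X := hsum.hasSum
  have hsq : HasSum (fun k => a k ^ 2) (π ^ 4 / 96) := by
    simpa [a_sq] using hb
  have hcombo : HasSum (fun k => 2 * (a k * P (k + 1)) - a k ^ 2)
      (2 * X - π ^ 4 / 96) := (hx.mul_left 2).sub hsq
  have ht1 := hcombo.tendsto_sum_nat
  have ht2 : Filter.Tendsto (fun N => (P N) ^ 2) Filter.atTop
      (nhds ((π ^ 2 / 8) ^ 2)) := by
    exact (ha.tendsto_sum_nat.pow 2)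
  simp only [telescope] at ht1
  have : 2 * X - π ^ 4 / 96 = (π ^ 2 / 8) ^ 2 := tendsto_nhds_unique ht1 ht2
  have hXval : X = ((π ^ 2 / 8) ^ 2 + π ^ 4 / 96) / 2 := by linarith
  rw [← hXval]; exact hx

lemma h_eq (k : ℕ) : h 2 (k + 1) = P (k + 1) := by
  rw [h, P, show Finset.Icc 1 (k+1) = Finset.Ico 1 (k+2) from rfl,
     Finset.sum_Ico_eq_sum_range]
  apply Finset.sum_congr rfl
  intro i _
  unfold a; push_cast; ring_nf

lemma zeta4 : zeta 4 = π ^ 4 / 90 := by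
  have h4 := hasSum_zeta_four
  have := (h4.summable.hasSum_iff_tendsto_nat).mp h4
  -- use tsum_eq_zero_add
  have hz : zeta 4 = ∑' n : ℕ, (1:ℝ) / ((n + 1 : ℕ) : ℝ) ^ 4 := by
    rw [zeta]; congr 1; funext n; push_cast; ring_nf
  rw [hz]
  have h0 : (∑' n : ℕ, (1:ℝ) / ((n : ℕ) : ℝ) ^ 4) = π ^ 4 / 90 := h4.tsum_eq
  rw [Summable.tsum_eq_zero_add h4.summable] at h0
  simpa using h0

end Stmt9Aux

open Stmt9Aux in
theorem stmt9 :
    ∑' k : ℕ, h 2 (k + 1) / (2 * ((k : ℝ) + 1) - 1) ^ 2 = 75 / 64 * zeta 4 := by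
  have : (fun k : ℕ => h 2 (k + 1) / (2 * ((k : ℝ) + 1) - 1) ^ 2)
      = fun k => a k * P (k + 1) := by
    funext k
    rw [h_eq]
    have : (2 * ((k : ℝ) + 1) - 1) = 2 * (k : ℝ) + 1 := by ring
    rw [this, a]; ring
  rw [this, key.tsum_eq, zeta4]
  ring
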